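/- (Asymptotic complexity of statistical decoding for sub-linear error weight.) Fix 0 < ω < 1/2. For 0 < τ < 1/2 − √(ω−ω²), let r(τ) = (1−2τ − √((1−2τ)²−4ω(1−ω)))/(2(1−ω)) and g(τ) = 2ω·log₂ r(τ) − 2τ·log₂(1−r(τ)) − 2(1−τ)·log₂(1+r(τ)) + 2H(ω). Then g(τ) = −2τ·log₂(1−2ω) + o(τ) as τ → 0⁺, i.e. lim_{τ→0⁺} (g(τ) + 2τ·log₂(1−2ω))/τ = 0. -/

import Mathlib

open Filter Topology

/-- The binary entropy function `H(x) = −x log₂ x − (1−x) log₂ (1−x)`. -/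
noncomputable def binH (x : ℝ) : ℝ :=
  -x * Real.logb 2 x - (1 - x) * Real.logb 2 (1 - x)

/-- asymptotic complexity of statistical decoding for a sub-linear
error weight: `g(τ) = −2τ log₂(1−2ω) + o(τ)` as `τ → 0⁺`. -/
theorem sublinear_exponent (ω : ℝ) (hω0 : 0 < ω) (hω : ω < 1 / 2) :
    Filter.Tendsto
      (fun τ : ℝ =>
        (let r : ℝ := (1 - 2 * τ - Real.sqrt ((1 - 2 * τ) ^ 2 - 4 * ω * (1 - ω))) /
          (2 * (1 - ω));
        (2 * ω * Real.logb 2 r - 2 * τ * Real.logb 2 (1 - r)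
          - 2 * (1 - τ) * Real.logb 2 (1 + r) + 2 * binH ω)
          + 2 * τ * Real.logb 2 (1 - 2 * ω)) / τ)
      (nhdsWithin 0 (Set.Ioi 0)) (nhds 0) := by
  have hω1 : (0:ℝ) < 1 - ω := by linarith
  have h12 : (0:ℝ) < 1 - 2*ω := by linarith
  have hL2 : 0 < Real.log 2 := Real.log_pos (by norm_num)
  set rf : ℝ → ℝ := fun τ => (1 - 2 * τ - Real.sqrt ((1 - 2 * τ) ^ 2 - 4 * ω * (1 - ω))) /
    (2 * (1 - ω)) with hrfdef
  have hq0 : (1 - 2*(0:ℝ))^2 - 4*ω*(1-ω) = (1-2*ω)^2 := by ring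
  have hsq0 : Real.sqrt ((1 - 2*(0:ℝ))^2 - 4*ω*(1-ω)) = 1-2*ω := by
    rw [hq0, Real.sqrt_sq h12.le]
  have hr0 : rf 0 = ω/(1-ω) := by
    rw [hrfdef]; simp only; rw [hsq0]; field_simp; ring
  have hr0pos : 0 < rf 0 := by rw [hr0]; positivity
  have h1mr : 1 - rf 0 = (1-2*ω)/(1-ω) := by rw [hr0]; field_simp; ring
  have h1pr : 1 + rf 0 = (1-ω)⁻¹ := by rw [hr0]; field_simp; ring
  have h1mrpos : 0 < 1 - rf 0 := by rw [h1mr]; positivity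
  have h1prpos : 0 < 1 + rf 0 := by positivity
  -- derivative of the inner quadratic
  have h2t : HasDerivAt (fun τ : ℝ => 1 - 2*τ) (-2) 0 := by
    simpa using ((hasDerivAt_id (0:ℝ)).const_mul 2).const_sub 1
  have hq : HasDerivAt (fun τ : ℝ => (1 - 2*τ)^2 - 4*ω*(1-ω)) (-4) 0 := by
    have := (h2t.pow 2).sub_const (4*ω*(1-ω))
    refine this.congr_deriv ?_
    norm_num
  have hsqrt : HasDerivAt (fun τ : ℝ => Real.sqrt ((1 - 2*τ)^2 - 4*ω*(1-ω)))
      (-2/(1-2*ω)) 0 := by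
    have hne : (1 - 2*(0:ℝ))^2 - 4*ω*(1-ω) ≠ 0 := by rw [hq0]; positivity
    have := (Real.hasDerivAt_sqrt hne).comp 0 hq
    refine this.congr_deriv ?_
    rw [hsq0]; field_simp; ring
  set R : ℝ := 2*ω/((1-2*ω)*(1-ω)) with hRdef
  have hr : HasDerivAt rf R 0 := by
    have := (h2t.sub hsqrt).div_const (2*(1-ω))
    refine this.congr_deriv ?_
    rw [hRdef]; field_simp; ring
  -- logb derivatives
  have hlog1 : HasDerivAt (fun τ => Real.logb 2 (rf τ)) ((rf 0)⁻¹ * R / Real.log 2) 0 := by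
    have := ((Real.hasDerivAt_log hr0pos.ne').comp 0 hr).div_const (Real.log 2)
    simpa [Real.logb] using this
  have hlog2 : HasDerivAt (fun τ => Real.logb 2 (1 - rf τ))
      ((1 - rf 0)⁻¹ * (-R) / Real.log 2) 0 := by
    have hm : HasDerivAt (fun τ => 1 - rf τ) (-R) 0 := hr.const_sub 1
    have := ((Real.hasDerivAt_log h1mrpos.ne').comp 0 hm).div_const (Real.log 2)
    simpa [Real.logb] using this
  have hlog3 : HasDerivAt (fun τ => Real.logb 2 (1 + rf τ))
      ((1 + rf 0)⁻¹ * R / Real.log 2) 0 := by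
    have hm : HasDerivAt (fun τ => 1 + rf τ) R 0 := hr.const_add 1
    have := ((Real.hasDerivAt_log h1prpos.ne').comp 0 hm).div_const (Real.log 2)
    simpa [Real.logb] using this
  -- assemble G
  set G : ℝ → ℝ := fun τ =>
    (2 * ω * Real.logb 2 (rf τ) - 2 * τ * Real.logb 2 (1 - rf τ)
      - 2 * (1 - τ) * Real.logb 2 (1 + rf τ) + 2 * binH ω)
      + 2 * τ * Real.logb 2 (1 - 2 * ω) with hGdef
  have h2t' : HasDerivAt (fun τ : ℝ => 2*τ) 2 0 := by
    simpa using (hasDerivAt_id (0:ℝ)).const_mul 2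
  have h2mt : HasDerivAt (fun τ : ℝ => 2*(1-τ)) (-2) 0 := by
    have : HasDerivAt (fun τ : ℝ => 1 - τ) (-1) 0 := by
      simpa using (hasDerivAt_id (0:ℝ)).const_sub 1
    simpa using this.const_mul 2
  have hA := hlog1.const_mul (2*ω)
  have hB := h2t'.mul hlog2
  have hC := h2mt.mul hlog3
  have hD := h2t'.mul_const (Real.logb 2 (1 - 2*ω))
  have hG' := (((hA.sub hB).sub hC).add_const (2 * binH ω)).add hD
  have hG : HasDerivAt G 0 0 := by
    have hderiv :
        (2*ω * ((rf 0)⁻¹ * R / Real.log 2)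
          - (2 * Real.logb 2 (1 - rf 0) + 2*0 * ((1 - rf 0)⁻¹ * (-R) / Real.log 2))
          - (-2 * Real.logb 2 (1 + rf 0) + 2*(1-(0:ℝ)) * ((1 + rf 0)⁻¹ * R / Real.log 2))
          + 2 * Real.logb 2 (1 - 2*ω)) = 0 := by
      rw [h1mr, h1pr, hr0, Real.logb, Real.logb, Real.logb, Real.log_div h12.ne' hω1.ne',
        Real.log_inv]
      field_simp
      ring
    rw [hGdef]
    exact hG'.congr_deriv hderiv
  have hG0 : G 0 = 0 := by
    have e1 : Real.logb 2 (1 + rf 0) = -Real.log (1 - ω) / Real.log 2 := by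
      rw [h1pr, Real.logb, Real.log_inv]
    have e2 : Real.logb 2 (rf 0) = (Real.log ω - Real.log (1 - ω)) / Real.log 2 := by
      rw [hr0, Real.logb, Real.log_div hω0.ne' hω1.ne']
    rw [hGdef]
    simp only [e1, e2, mul_zero, zero_mul]
    simp only [binH, Real.logb]
    field_simp
    ring
  have key := hasDerivAt_iff_tendsto_slope.mp hG
  have hsub : Set.Ioi (0:ℝ) ⊆ {(0:ℝ)}ᶜ := fun x hx => ne_of_gt hx
  have key2 : Tendsto (fun τ => G τ / τ) (nhdsWithin 0 (Set.Ioi 0)) (nhds 0) := by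
    refine (key.mono_left (nhdsWithin_mono 0 hsub)).congr fun τ => ?_
    rw [slope_def_field, hG0]
    simp [div_eq_mul_inv]
  exact key2
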